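/- Let c ∈ ℂ, let k ≥ 1 be a natural number, and let g : ℂ → ℂ be analytic at c with g(c) ≠ 0. Define f(z) := g(z) · (z − c)⁻ᵏ on a punctured neighborhood of c (so f has a pole of order k at c). Then (z − c)² · MP(f)(z) tends to −k²/(4π²) as z → c within the punctured neighborhood 𝓝[≠] c. In particular MP(f) has a pole of order exactly 2 at c, with quadratic residue −k²/(4π²). -/

import Mathlib

open Complex Filter

/-- The Mulase–Penkava density of a function `f : ℂ → ℂ`:
`MP f z = (1/(4π²)) · (f'(z))² / (f z · (1 − f z))`. -/
noncomputable def MP (f : ℂ → ℂ) (z : ℂ) : ℂ :=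
  (1 / (4 * (Real.pi : ℂ) ^ 2)) * (deriv f z) ^ 2 / (f z * (1 - f z))

/-- If `f` has a pole of order `k ≥ 1` at `c` (i.e. `f z = g z · (z − c)⁻ᵏ` on a punctured
neighborhood of `c`, with `g` analytic at `c` and `g c ≠ 0`), then `(z − c)² · MP f z`
tends to `−k²/(4π²)` as `z → c` within `𝓝[≠] c`: the quadratic residue of `MP f` at its
double pole `c` is `−k²/(4π²)`. -/
theorem stmt_1 (c : ℂ) (k : ℕ) (hk : 1 ≤ k) (g f : ℂ → ℂ)
    (hg : AnalyticAt ℂ g c) (hgc : g c ≠ 0)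
    (hf : ∀ᶠ z in nhdsWithin c {c}ᶜ, f z = g z * ((z - c) ^ k)⁻¹) :
    Tendsto (fun z => (z - c) ^ 2 * MP f z) (nhdsWithin c {c}ᶜ)
      (nhds (-(k : ℂ) ^ 2 / (4 * (Real.pi : ℂ) ^ 2))) := by
  obtain ⟨m, rfl⟩ : ∃ m, k = m + 1 := ⟨k - 1, (Nat.succ_pred_eq_of_pos hk).symm⟩
  set k := m + 1 with hkdef
  set F : ℂ → ℂ := fun z =>
    (1 / (4 * (Real.pi : ℂ) ^ 2)) * (deriv g z * (z - c) - (k : ℂ) * g z) ^ 2 /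
      (g z * ((z - c) ^ k - g z)) with hF
  have hgd : ∀ᶠ z in nhds c, AnalyticAt ℂ g z := hg.eventually_analyticAt
  have hgne : ∀ᶠ z in nhds c, g z ≠ 0 := hg.continuousAt.eventually_ne hgc
  have hQne : ∀ᶠ z in nhds c, (z - c) ^ k - g z ≠ 0 := by
    have hc : ContinuousAt (fun z : ℂ => (z - c) ^ k - g z) c :=
      ((continuousAt_id.sub continuousAt_const).pow k).sub hg.continuousAt
    have h0 : (fun z : ℂ => (z - c) ^ k - g z) c ≠ 0 := by
      simp [hkdef, hgc]
    exact hc.eventually_ne h0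
  have hf' : ∀ᶠ z in nhds c, z ≠ c → f z = g z * ((z - c) ^ k)⁻¹ := by
    rw [eventually_nhdsWithin_iff] at hf
    exact hf
  have key : (fun z => (z - c) ^ 2 * MP f z) =ᶠ[nhdsWithin c {c}ᶜ] F := by
    filter_upwards [self_mem_nhdsWithin,
      eventually_nhdsWithin_of_eventually_nhds hf'.eventually_nhds,
      eventually_nhdsWithin_of_eventually_nhds hgd,
      eventually_nhdsWithin_of_eventually_nhds hgne,
      eventually_nhdsWithin_of_eventually_nhds hQne,
      hf] with z hz hfe hga hgz hQ hfz
    have hzc : z ≠ c := hz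
    have hw : z - c ≠ 0 := sub_ne_zero.mpr hzc
    have hwk : (z - c) ^ k ≠ 0 := pow_ne_zero _ hw
    have hder : HasDerivAt f
        (deriv g z * ((z - c) ^ k)⁻¹ +
          g z * (-((k : ℂ) * (z - c) ^ (k - 1) * 1) / ((z - c) ^ k) ^ 2)) z := by
      have h1 : HasDerivAt (fun w : ℂ => w - c) 1 z := (hasDerivAt_id z).sub_const c
      have h2 : HasDerivAt (fun w : ℂ => (w - c) ^ k) ((k : ℂ) * (z - c) ^ (k - 1) * 1) z :=
        h1.pow k
      have h3 : HasDerivAt (fun w : ℂ => ((w - c) ^ k)⁻¹)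
          (-((k : ℂ) * (z - c) ^ (k - 1) * 1) / ((z - c) ^ k) ^ 2) z := h2.inv hwk
      have h4 := (hga.differentiableAt.hasDerivAt).mul h3
      refine h4.congr_of_eventuallyEq ?_
      filter_upwards [hfe, eventually_ne_nhds hzc] with w hw1 hw2
      exact hw1 hw2
    have hD : deriv f z = deriv g z * ((z - c) ^ k)⁻¹ +
          g z * (-((k : ℂ) * (z - c) ^ (k - 1) * 1) / ((z - c) ^ k) ^ 2) := hder.deriv
    have hkm : k - 1 = m := rfl
    have hpow : (z - c) ^ k = (z - c) ^ m * (z - c) := pow_succ _ _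
    simp only [MP, hfz, hD, hF, hkm, hpow]
    set W := (z - c) ^ m with hWdef
    have hW : W ≠ 0 := pow_ne_zero _ hw
    rw [hpow] at hQ
    clear_value W
    clear hWdef hD hder hfz hfe hf hf' hQne hgne hgd hF hwk hpow
    set w := z - c with hwdef
    clear_value w
    clear hwdef hzc hz
    set a := g z with hadef
    set d := deriv g z with hddef
    clear_value a d
    clear hadef hddef hga
    set K : ℂ := (k : ℂ) with hKdef
    clear_value K
    clear hKdef
    have hWw : W * w ≠ 0 := mul_ne_zero hW hw
    have e1 : d * (W * w)⁻¹ + a * (-(K * W * 1) / (W * w) ^ 2)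
        = (d * w - K * a) / (W * w ^ 2) := by
      field_simp
      ring
    have e2 : a * (W * w)⁻¹ * (1 - a * (W * w)⁻¹)
        = a * (W * w - a) / (W * w) ^ 2 := by
      field_simp
    have hpi : (Real.pi : ℂ) ≠ 0 := by exact_mod_cast Real.pi_ne_zero
    rw [e1, e2]
    field_simp [hW, hw, hgz, hQ, hpi]
  refine (Tendsto.congr' key.symm ?_)
  have hcont : ContinuousAt F c := by
    apply ContinuousAt.div
    · have h1 : ContinuousAt (fun z => fderiv ℂ g z 1) c :=
        ((ContinuousLinearMap.apply ℂ ℂ (1:ℂ)).continuous.continuousAt).comp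
          hg.fderiv.continuousAt
      have h2 : (fun z => fderiv ℂ g z 1) = deriv g := funext fun z => fderiv_apply_one_eq_deriv
      rw [h2] at h1
      exact continuousAt_const.mul
        (((h1.mul ((continuousAt_id.sub continuousAt_const))).sub
          (continuousAt_const.mul hg.continuousAt)).pow 2)
    · exact hg.continuousAt.mul
        (((continuousAt_id.sub continuousAt_const).pow k).sub hg.continuousAt)
    · simp [hkdef, hgc]
  have hval : F c = -(k : ℂ) ^ 2 / (4 * (Real.pi : ℂ) ^ 2) := by
    have hpi : (Real.pi : ℂ) ≠ 0 := by exact_mod_cast Real.pi_ne_zero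
    simp only [hF, sub_self, hkdef]
    rw [zero_pow (Nat.succ_ne_zero m)]
    field_simp
    ring
  have := hcont.tendsto
  rw [hval] at this
  exact this.mono_left nhdsWithin_le_nhds
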